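/- arXiv:1406.5795 — 6 statements merged into one kernel-verified Lean document; each statement's English description precedes it below -/
import Mathlib

section
/- Let α be a measurable space and β a standard Borel space, let ρ be a finite measure on α × β, and let f : α → ℝ≥0∞ be measurable with 0 < f a < ∞ for every a ∈ α. Suppose the reweighted measure ρ' := ρ.withDensity (fun p => f p.1) is finite. Then the disintegration (regular conditional distribution) kernels of ρ' and ρ agree almost everywhere: for ρ'.fst-almost every a ∈ α, ρ'.condKernel a = ρ.condKernel a. -/
open MeasureTheory ProbabilityTheory ENNReal

theorem condKernel_withDensity_fst {α β : Type*} [MeasurableSpace α]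
    [MeasurableSpace β] [StandardBorelSpace β] [Nonempty β]
    (ρ : Measure (α × β)) [IsFiniteMeasure ρ]
    (f : α → ℝ≥0∞) (hf : Measurable f)
    (hpos : ∀ a, 0 < f a) (hfin : ∀ a, f a < ∞)
    (ρ' : Measure (α × β)) (hρ' : ρ' = ρ.withDensity (fun p => f p.1))
    [IsFiniteMeasure ρ'] :
    ∀ᵐ a ∂ρ'.fst, ρ'.condKernel a = ρ.condKernel a := by
  have hf1 : Measurable fun p : α × β => f p.1 := hf.comp measurable_fst
  have hfst : ρ'.fst = ρ.fst.withDensity f := by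
    ext s hs
    rw [Measure.fst_apply hs, hρ', withDensity_apply _ (measurable_fst hs),
      withDensity_apply _ hs, Measure.fst, setLIntegral_map hs hf measurable_fst]
  have h2 : ρ' = ρ'.fst ⊗ₘ ρ.condKernel := by
    ext s hs
    rw [Measure.compProd_apply hs, hfst, lintegral_withDensity_eq_lintegral_mul _ hf
      (Kernel.measurable_kernel_prodMk_left hs)]
    calc ρ' s = ∫⁻ p in s, f p.1 ∂ρ := by rw [hρ', withDensity_apply _ hs]
    _ = ∫⁻ p in s, f p.1 ∂(ρ.fst ⊗ₘ ρ.condKernel) := by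
        rw [Measure.disintegrate ρ ρ.condKernel]
    _ = ∫⁻ p, s.indicator (fun p : α × β => f p.1) p ∂(ρ.fst ⊗ₘ ρ.condKernel) := by
        rw [lintegral_indicator hs]
    _ = ∫⁻ a, ∫⁻ b, s.indicator (fun p : α × β => f p.1) (a, b) ∂ρ.condKernel a ∂ρ.fst := by
        rw [Measure.lintegral_compProd (hf1.indicator hs)]
    _ = ∫⁻ a, f a * ρ.condKernel a (Prod.mk a ⁻¹' s) ∂ρ.fst := by
        refine lintegral_congr fun a => ?_
        have : ∀ b, s.indicator (fun p : α × β => f p.1) (a, b)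
            = f a * (Prod.mk a ⁻¹' s).indicator 1 b := by
          intro b
          by_cases hb : (a, b) ∈ s <;>
            simp [Set.indicator, hb, Set.mem_preimage]
        simp_rw [this]
        rw [lintegral_const_mul _ ((measurable_one).indicator (measurable_prodMk_left hs)),
          lintegral_indicator_one (measurable_prodMk_left hs)]
  filter_upwards [eq_condKernel_of_measure_eq_compProd ρ.condKernel h2] with a ha
  exact ha.symm
end

section
/- Let ψ be a probability measure on a measurable space X, let γ > 0, and let h : X → ℝ≥0∞ be measurable with 0 < h y ≤ γ for every y ∈ X, and set π := ψ.withDensity h. Then for every x ∈ X and every measurable set A, the accepted-move mass of the independence Metropolis–Hastings kernel satisfies ∫⁻_{y ∈ A} min 1 (h y / h x) dψ(y) ≥ γ⁻¹ * π(A); consequently the full independence Metropolis–Hastings kernel K with target π and proposal ψ satisfies the one-step minorization K(x, A) ≥ γ⁻¹ π(A) for all x and A. -/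
open MeasureTheory ENNReal

/-- The independence Metropolis–Hastings kernel with proposal `ψ` and target
`ψ.withDensity h`: propose `y ∼ ψ`, accept with probability `min 1 (h y / h x)`,
otherwise stay at `x`. -/
noncomputable def mhKernel {X : Type*} [MeasurableSpace X]
    (ψ : Measure X) (h : X → ℝ≥0∞) (x : X) : Measure X :=
  ψ.withDensity (fun y => min 1 (h y / h x)) +
    (1 - ∫⁻ y, min 1 (h y / h x) ∂ψ) • Measure.dirac x

theorem independence_mh_minorization {X : Type*} [MeasurableSpace X]
    (ψ : Measure X) [IsProbabilityMeasure ψ]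
    (γ : ℝ≥0∞) (hγ : 0 < γ)
    (h : X → ℝ≥0∞) (hm : Measurable h)
    (hpos : ∀ y, 0 < h y) (hle : ∀ y, h y ≤ γ) :
    (∀ x : X, ∀ A : Set X, MeasurableSet A →
        γ⁻¹ * (ψ.withDensity h) A ≤ ∫⁻ y in A, min 1 (h y / h x) ∂ψ) ∧
    (∀ x : X, ∀ A : Set X, MeasurableSet A →
        γ⁻¹ * (ψ.withDensity h) A ≤ mhKernel ψ h x A) := by
  have key : ∀ x : X, ∀ A : Set X, MeasurableSet A →
      γ⁻¹ * (ψ.withDensity h) A ≤ ∫⁻ y in A, min 1 (h y / h x) ∂ψ := by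
    intro x A hA
    have hpt : ∀ y, γ⁻¹ * h y ≤ min 1 (h y / h x) := by
      intro y
      have h1 : γ⁻¹ * h y ≤ 1 := by
        rw [mul_comm, ← div_eq_mul_inv]
        exact ENNReal.div_le_of_le_mul (by simpa using hle y)
      have h2 : γ⁻¹ * h y ≤ h y / h x := by
        rw [mul_comm, ← div_eq_mul_inv]
        exact ENNReal.div_le_div_left (hle x) (h y)
      exact le_min h1 h2
    calc γ⁻¹ * (ψ.withDensity h) A = γ⁻¹ * ∫⁻ y in A, h y ∂ψ := by
          rw [withDensity_apply h hA]
      _ = ∫⁻ y in A, γ⁻¹ * h y ∂ψ := (lintegral_const_mul _ hm).symm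
      _ ≤ ∫⁻ y in A, min 1 (h y / h x) ∂ψ := lintegral_mono fun y => hpt y
  refine ⟨key, fun x A hA => ?_⟩
  refine (key x A hA).trans ?_
  have : ∫⁻ y in A, min 1 (h y / h x) ∂ψ
      = ψ.withDensity (fun y => min 1 (h y / h x)) A := by
    rw [withDensity_apply _ hA]
  rw [this, mhKernel]
  exact le_trans (le_add_right le_rfl) (le_of_eq (Measure.add_apply _ _ _).symm)
end

section
/- Let X be a measurable space, let c ∈ ℝ≥0∞ and let κ and κ̃ be (sub-Markov) kernels from X to X such that c * κ̃(x, A) ≤ κ(x, A) for every x ∈ X and every measurable set A. Then for every n ≥ 1, the n-fold compositions satisfy cⁿ * κ̃ⁿ(x, A) ≤ κⁿ(x, A) for every x and every measurable A. -/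
open MeasureTheory ProbabilityTheory ENNReal

/-- The `n`-fold iterate of a kernel: `κ⁰ = δ_x`, `κⁿ⁺¹(x, ·) = (κⁿ(x, ·)).bind κ`. -/
noncomputable def kernelIter {X : Type*} [MeasurableSpace X] (κ : Kernel X X) :
    ℕ → X → Measure X
  | 0 => fun x => Measure.dirac x
  | n + 1 => fun x => (kernelIter κ n x).bind (fun y => κ y)

theorem kernel_comparison_iterate {X : Type*} [MeasurableSpace X]
    (c : ℝ≥0∞) (κ κ' : Kernel X X)
    (hκ : ∀ x, κ x Set.univ ≤ 1) (hκ' : ∀ x, κ' x Set.univ ≤ 1)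
    (hle : ∀ x, ∀ A : Set X, MeasurableSet A → c * κ' x A ≤ κ x A) :
    ∀ n : ℕ, 1 ≤ n → ∀ x, ∀ A : Set X, MeasurableSet A →
      c ^ n * kernelIter κ' n x A ≤ kernelIter κ n x A := by
  have main : ∀ n : ℕ, ∀ x, ∀ A : Set X, MeasurableSet A →
      c ^ n * kernelIter κ' n x A ≤ kernelIter κ n x A := by
    intro n
    induction n with
    | zero => intro x A hA; simp [kernelIter]
    | succ n ih =>
      intro x A hA
      have hmeas : (c ^ n) • kernelIter κ' n x ≤ kernelIter κ n x :=
        Measure.le_iff.mpr fun B hB => by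
          simpa using ih x B hB
      calc c ^ (n + 1) * kernelIter κ' (n + 1) x A
          = c ^ n * (c * ∫⁻ y, κ' y A ∂(kernelIter κ' n x)) := by
            rw [show kernelIter κ' (n+1) x = (kernelIter κ' n x).bind (fun y => κ' y) from rfl,
              Measure.bind_apply hA (Kernel.measurable κ').aemeasurable]
            ring
        _ = ∫⁻ y, c * κ' y A ∂((c ^ n) • kernelIter κ' n x) := by
            rw [lintegral_smul_measure, lintegral_const_mul _ (Kernel.measurable_coe κ' hA), smul_eq_mul]
        _ ≤ ∫⁻ y, c * κ' y A ∂(kernelIter κ n x) :=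
            lintegral_mono' hmeas le_rfl
        _ ≤ ∫⁻ y, κ y A ∂(kernelIter κ n x) :=
            lintegral_mono fun y => hle y A hA
        _ = kernelIter κ (n + 1) x A := by
            rw [show kernelIter κ (n+1) x = (kernelIter κ n x).bind (fun y => κ y) from rfl,
              Measure.bind_apply hA (Kernel.measurable κ).aemeasurable]
  intro n _ x A hA
  exact main n x A hA
end

section
/- Let X be a measurable space, let γ ≥ 1 and ε > 0, let ν be a probability measure on X, let n₀ ≥ 1, and let κ, κ̃ be (sub-Markov) kernels from X to X such that γ⁻¹ * κ̃(x, A) ≤ κ(x, A) for all x and measurable A, and such that κ̃ satisfies the minorization condition κ̃^{n₀}(x, A) ≥ ε ν(A) for all x and measurable A. Then κ satisfies the minorization condition κ^{n₀}(x, A) ≥ γ^{-n₀} ε ν(A) for all x and measurable A. -/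
open MeasureTheory ProbabilityTheory ENNReal

lemma kernelIter_smul_le {X : Type*} [MeasurableSpace X]
    (γ : ℝ≥0∞) (κ κ' : Kernel X X)
    (hle : ∀ x, ∀ A : Set X, MeasurableSet A → γ⁻¹ * κ' x A ≤ κ x A) :
    ∀ n x, (γ⁻¹ ^ n) • kernelIter κ' n x ≤ kernelIter κ n x := by
  intro n
  induction n with
  | zero => intro x; simp [kernelIter]
  | succ n ih =>
    intro x
    refine Measure.le_iff.mpr fun A hA => ?_
    have hb' : (kernelIter κ' n x).bind (fun y => κ' y) A
        = ∫⁻ y, κ' y A ∂(kernelIter κ' n x) :=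
      Measure.bind_apply hA (Kernel.measurable κ').aemeasurable
    have hb : (kernelIter κ n x).bind (fun y => κ y) A
        = ∫⁻ y, κ y A ∂(kernelIter κ n x) :=
      Measure.bind_apply hA (Kernel.measurable κ).aemeasurable
    simp only [kernelIter, Measure.smul_apply, smul_eq_mul, hb', hb]
    calc γ⁻¹ ^ (n + 1) * ∫⁻ y, κ' y A ∂(kernelIter κ' n x)
        = ∫⁻ y, γ⁻¹ * κ' y A ∂((γ⁻¹ ^ n) • kernelIter κ' n x) := by
          rw [lintegral_smul_measure, lintegral_const_mul _ (Kernel.measurable_coe κ' hA),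
            pow_succ]
          ring
      _ ≤ ∫⁻ y, κ y A ∂((γ⁻¹ ^ n) • kernelIter κ' n x) :=
          lintegral_mono fun y => hle y A hA
      _ ≤ ∫⁻ y, κ y A ∂(kernelIter κ n x) := lintegral_mono' (ih x) le_rfl

theorem minorization_transfer {X : Type*} [MeasurableSpace X]
    (γ ε : ℝ≥0∞) (hγ : 1 ≤ γ) (hε : 0 < ε)
    (ν : Measure X) [IsProbabilityMeasure ν]
    (n₀ : ℕ) (hn₀ : 1 ≤ n₀)
    (κ κ' : Kernel X X)
    (hκ : ∀ x, κ x Set.univ ≤ 1) (hκ' : ∀ x, κ' x Set.univ ≤ 1)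
    (hle : ∀ x, ∀ A : Set X, MeasurableSet A → γ⁻¹ * κ' x A ≤ κ x A)
    (hminor : ∀ x, ∀ A : Set X, MeasurableSet A → ε * ν A ≤ kernelIter κ' n₀ x A) :
    ∀ x, ∀ A : Set X, MeasurableSet A →
      γ⁻¹ ^ n₀ * ε * ν A ≤ kernelIter κ n₀ x A := by
  intro x A hA
  calc γ⁻¹ ^ n₀ * ε * ν A = γ⁻¹ ^ n₀ * (ε * ν A) := by ring
    _ ≤ γ⁻¹ ^ n₀ * kernelIter κ' n₀ x A :=
        mul_le_mul_right (hminor x A hA) _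
    _ ≤ kernelIter κ n₀ x A := by
        have := kernelIter_smul_le γ κ κ' hle n₀ x A
        simpa using this
end

section
/- Let X be a measurable space, let κ be a Markov kernel from X to X, let ε ∈ (0, 1], and let ν be a probability measure on X such that κ(x, A) ≥ ε ν(A) for every x ∈ X and every measurable A (Doeblin minorization). Then for any two probability measures μ₁, μ₂ on X and every measurable set A, |(μ₁.bind κ)(A) − (μ₂.bind κ)(A)| ≤ (1 − ε) * (⨆ over measurable sets B of |μ₁(B) − μ₂(B)|). In particular, one step of κ contracts the total variation distance between probability measures by the factor (1 − ε). -/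
open MeasureTheory ProbabilityTheory ENNReal

lemma doeblin_aux {X : Type*} [MeasurableSpace X]
    (μ₁ μ₂ : Measure X) [IsFiniteMeasure μ₁] [IsFiniteMeasure μ₂]
    (g : X → ℝ≥0∞) (c D : ℝ≥0∞) (hgc : ∀ x, g x ≤ c)
    (hD : ∀ B : Set X, MeasurableSet B → μ₁ B - μ₂ B ≤ D) :
    ∫⁻ x, g x ∂μ₁ ≤ ∫⁻ x, g x ∂μ₂ + c * D := by
  obtain ⟨s, hs, hs₁, hs₂⟩ := hahn_decomposition (μ := μ₁) (ν := μ₂)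
  have hle : μ₂.restrict s ≤ μ₁.restrict s := by
    refine Measure.le_intro fun t ht _ => ?_
    rw [Measure.restrict_apply ht, Measure.restrict_apply ht]
    exact hs₁ _ (ht.inter hs) Set.inter_subset_right
  have hle' : μ₁.restrict sᶜ ≤ μ₂.restrict sᶜ := by
    refine Measure.le_intro fun t ht _ => ?_
    rw [Measure.restrict_apply ht, Measure.restrict_apply ht]
    exact hs₂ _ (ht.inter hs.compl) Set.inter_subset_right
  have hsplit : μ₁.restrict s = (μ₁.restrict s - μ₂.restrict s) + μ₂.restrict s :=
    (Measure.sub_add_cancel_of_le hle).symm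
  calc ∫⁻ x, g x ∂μ₁
      = ∫⁻ x, g x ∂(μ₁.restrict s) + ∫⁻ x, g x ∂(μ₁.restrict sᶜ) := by
        rw [← lintegral_add_measure, Measure.restrict_add_restrict_compl hs]
    _ ≤ (∫⁻ x, g x ∂(μ₁.restrict s - μ₂.restrict s) + ∫⁻ x, g x ∂(μ₂.restrict s))
          + ∫⁻ x, g x ∂(μ₂.restrict sᶜ) := by
        have h2 : ∫⁻ x, g x ∂(μ₁.restrict s)
            = ∫⁻ x, g x ∂(μ₁.restrict s - μ₂.restrict s) + ∫⁻ x, g x ∂(μ₂.restrict s) := by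
          conv_lhs => rw [hsplit]
          rw [lintegral_add_measure]
        exact add_le_add h2.le (lintegral_mono' hle' le_rfl)
    _ = ∫⁻ x, g x ∂(μ₁.restrict s - μ₂.restrict s) + ∫⁻ x, g x ∂μ₂ := by
        rw [add_assoc, ← lintegral_add_measure, Measure.restrict_add_restrict_compl hs]
    _ ≤ c * D + ∫⁻ x, g x ∂μ₂ := by
        refine add_le_add ?_ le_rfl
        calc ∫⁻ x, g x ∂(μ₁.restrict s - μ₂.restrict s)
            ≤ ∫⁻ _, c ∂(μ₁.restrict s - μ₂.restrict s) := lintegral_mono hgc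
          _ = c * (μ₁.restrict s - μ₂.restrict s) Set.univ := by rw [lintegral_const]
          _ ≤ c * D := by
              refine mul_le_mul_right ?_ c
              rw [Measure.sub_apply MeasurableSet.univ hle,
                Measure.restrict_apply_univ, Measure.restrict_apply_univ]
              exact hD s hs
    _ = ∫⁻ x, g x ∂μ₂ + c * D := add_comm _ _

theorem doeblin_tv_contraction {X : Type*} [MeasurableSpace X]
    (κ : Kernel X X) [IsMarkovKernel κ]
    (ε : ℝ) (hε : ε ∈ Set.Ioc (0 : ℝ) 1)
    (ν : Measure X) [IsProbabilityMeasure ν]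
    (hminor : ∀ x, ∀ A : Set X, MeasurableSet A → ENNReal.ofReal ε * ν A ≤ κ x A)
    (μ₁ μ₂ : Measure X) [IsProbabilityMeasure μ₁] [IsProbabilityMeasure μ₂]
    (A : Set X) (hA : MeasurableSet A) :
    |((μ₁.bind (fun x => κ x)) A).toReal - ((μ₂.bind (fun x => κ x)) A).toReal| ≤
      (1 - ε) * ⨆ (B : Set X) (_ : MeasurableSet B), |(μ₁ B).toReal - (μ₂ B).toReal| := by
  obtain ⟨hε0, hε1⟩ := hε
  set Dr := ⨆ (B : Set X) (_ : MeasurableSet B), |(μ₁ B).toReal - (μ₂ B).toReal| with hDr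
  -- boundedness of the sup
  have hbd1 : ∀ B : Set X, (⨆ (_ : MeasurableSet B), |(μ₁ B).toReal - (μ₂ B).toReal|) ≤ 1 := by
    intro B
    refine Real.iSup_le (fun _ => ?_) zero_le_one
    have h1 : (μ₁ B).toReal ≤ 1 := by
      simpa using ENNReal.toReal_mono one_ne_top (prob_le_one (μ := μ₁) (s := B))
    have h2 : (μ₂ B).toReal ≤ 1 := by
      simpa using ENNReal.toReal_mono one_ne_top (prob_le_one (μ := μ₂) (s := B))
    rw [abs_sub_le_iff]
    constructor <;> [skip; skip] <;> nlinarith [ENNReal.toReal_nonneg (a := μ₁ B), ENNReal.toReal_nonneg (a := μ₂ B)]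
  have hbdd : BddAbove (Set.range fun B : Set X =>
      ⨆ (_ : MeasurableSet B), |(μ₁ B).toReal - (μ₂ B).toReal|) :=
    ⟨1, by rintro _ ⟨B, rfl⟩; exact hbd1 B⟩
  have hle : ∀ B : Set X, MeasurableSet B → |(μ₁ B).toReal - (μ₂ B).toReal| ≤ Dr := by
    intro B hB
    refine le_ciSup_of_le hbdd B ?_
    rw [ciSup_pos hB]
  have hDr0 : 0 ≤ Dr := le_trans (by simp) (hle ∅ MeasurableSet.empty)
  -- ENNReal version of TV bound
  have hD : ∀ B : Set X, MeasurableSet B → μ₁ B - μ₂ B ≤ ENNReal.ofReal Dr := by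
    intro B hB
    rw [tsub_le_iff_right]
    have h : (μ₁ B).toReal ≤ Dr + (μ₂ B).toReal := by
      have := hle B hB
      have := abs_sub_le_iff.mp (hle B hB)
      linarith [this.1]
    calc μ₁ B = ENNReal.ofReal (μ₁ B).toReal := (ENNReal.ofReal_toReal (measure_ne_top _ _)).symm
      _ ≤ ENNReal.ofReal (Dr + (μ₂ B).toReal) := ENNReal.ofReal_le_ofReal h
      _ = ENNReal.ofReal Dr + μ₂ B := by
          rw [ENNReal.ofReal_add hDr0 ENNReal.toReal_nonneg,
            ENNReal.ofReal_toReal (measure_ne_top _ _)]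
  have hD' : ∀ B : Set X, MeasurableSet B → μ₂ B - μ₁ B ≤ ENNReal.ofReal Dr := by
    intro B hB
    rw [tsub_le_iff_right]
    have h : (μ₂ B).toReal ≤ Dr + (μ₁ B).toReal := by
      have := abs_sub_le_iff.mp (hle B hB)
      linarith [this.2]
    calc μ₂ B = ENNReal.ofReal (μ₂ B).toReal := (ENNReal.ofReal_toReal (measure_ne_top _ _)).symm
      _ ≤ ENNReal.ofReal (Dr + (μ₁ B).toReal) := ENNReal.ofReal_le_ofReal h
      _ = ENNReal.ofReal Dr + μ₁ B := by
          rw [ENNReal.ofReal_add hDr0 ENNReal.toReal_nonneg,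
            ENNReal.ofReal_toReal (measure_ne_top _ _)]
  -- the residual function
  set g : X → ℝ≥0∞ := fun x => κ x A - ENNReal.ofReal ε * ν A with hg
  have hgdecomp : ∀ x, κ x A = g x + ENNReal.ofReal ε * ν A := fun x =>
    (tsub_add_cancel_of_le (hminor x A hA)).symm
  have hgc : ∀ x, g x ≤ ENNReal.ofReal (1 - ε) := by
    intro x
    rw [hg]
    rw [tsub_le_iff_right]
    have key : κ x A + ENNReal.ofReal ε * ν Aᶜ ≤
        ENNReal.ofReal (1 - ε) + ENNReal.ofReal ε * ν A + ENNReal.ofReal ε * ν Aᶜ := by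
      have h1 : κ x A + κ x Aᶜ = 1 := by
        rw [measure_add_measure_compl hA, measure_univ]
      have h2 : (ENNReal.ofReal (1 - ε) + ENNReal.ofReal ε * ν A) + ENNReal.ofReal ε * ν Aᶜ
          = 1 := by
        rw [add_assoc, ← mul_add, measure_add_measure_compl hA, measure_univ, mul_one,
          ← ENNReal.ofReal_add (by linarith) (le_of_lt hε0)]
        norm_num
      calc κ x A + ENNReal.ofReal ε * ν Aᶜ ≤ κ x A + κ x Aᶜ :=
            add_le_add le_rfl (hminor x Aᶜ hA.compl)
        _ = 1 := h1
        _ = _ := h2.symm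
    have hfin : ENNReal.ofReal ε * ν Aᶜ ≠ ⊤ :=
      ENNReal.mul_ne_top ENNReal.ofReal_ne_top (measure_ne_top _ _)
    exact ENNReal.le_of_add_le_add_right hfin key
  -- bind expressions
  have hbind : ∀ (μ : Measure X) [IsProbabilityMeasure μ],
      (μ.bind (fun x => κ x)) A = ∫⁻ x, g x ∂μ + ENNReal.ofReal ε * ν A := by
    intro μ _
    rw [Measure.bind_apply hA (Kernel.measurable κ).aemeasurable]
    calc ∫⁻ x, κ x A ∂μ = ∫⁻ x, g x + ENNReal.ofReal ε * ν A ∂μ := by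
          exact lintegral_congr fun x => hgdecomp x
      _ = ∫⁻ x, g x ∂μ + ENNReal.ofReal ε * ν A := by
          rw [lintegral_add_right _ measurable_const, lintegral_const, measure_univ, mul_one]
  have key₁ : (μ₁.bind (fun x => κ x)) A ≤ (μ₂.bind (fun x => κ x)) A
      + ENNReal.ofReal ((1 - ε) * Dr) := by
    rw [hbind μ₁, hbind μ₂, ENNReal.ofReal_mul (by linarith)]
    have := doeblin_aux μ₁ μ₂ g (ENNReal.ofReal (1 - ε)) (ENNReal.ofReal Dr) hgc hD
    calc ∫⁻ x, g x ∂μ₁ + ENNReal.ofReal ε * ν A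
        ≤ (∫⁻ x, g x ∂μ₂ + ENNReal.ofReal (1 - ε) * ENNReal.ofReal Dr)
          + ENNReal.ofReal ε * ν A := add_le_add this le_rfl
      _ = _ := by ring
  have key₂ : (μ₂.bind (fun x => κ x)) A ≤ (μ₁.bind (fun x => κ x)) A
      + ENNReal.ofReal ((1 - ε) * Dr) := by
    rw [hbind μ₁, hbind μ₂, ENNReal.ofReal_mul (by linarith)]
    have := doeblin_aux μ₂ μ₁ g (ENNReal.ofReal (1 - ε)) (ENNReal.ofReal Dr) hgc hD'
    calc ∫⁻ x, g x ∂μ₂ + ENNReal.ofReal ε * ν A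
        ≤ (∫⁻ x, g x ∂μ₁ + ENNReal.ofReal (1 - ε) * ENNReal.ofReal Dr)
          + ENNReal.ofReal ε * ν A := add_le_add this le_rfl
      _ = _ := by ring
  -- conclude in reals
  have hgfin : ∀ (μ : Measure X) [IsProbabilityMeasure μ], ∫⁻ x, g x ∂μ ≠ ⊤ := by
    intro μ _
    have hb : ∫⁻ x, g x ∂μ ≤ ENNReal.ofReal (1 - ε) := by
      calc ∫⁻ x, g x ∂μ ≤ ∫⁻ _, ENNReal.ofReal (1 - ε) ∂μ := lintegral_mono hgc
        _ = ENNReal.ofReal (1 - ε) := by rw [lintegral_const, measure_univ, mul_one]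
    exact ne_top_of_le_ne_top ENNReal.ofReal_ne_top hb
  have hfin₁ : (μ₁.bind (fun x => κ x)) A ≠ ⊤ := by
    rw [hbind μ₁]
    exact ENNReal.add_ne_top.mpr ⟨hgfin μ₁,
      ENNReal.mul_ne_top ENNReal.ofReal_ne_top (measure_ne_top _ _)⟩
  have hfin₂ : (μ₂.bind (fun x => κ x)) A ≠ ⊤ := by
    rw [hbind μ₂]
    exact ENNReal.add_ne_top.mpr ⟨hgfin μ₂,
      ENNReal.mul_ne_top ENNReal.ofReal_ne_top (measure_ne_top _ _)⟩
  have h1 : ((μ₁.bind (fun x => κ x)) A).toReal ≤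
      ((μ₂.bind (fun x => κ x)) A).toReal + (1 - ε) * Dr := by
    have := ENNReal.toReal_mono (ENNReal.add_ne_top.mpr ⟨hfin₂, ENNReal.ofReal_ne_top⟩) key₁
    rwa [ENNReal.toReal_add hfin₂ ENNReal.ofReal_ne_top,
      ENNReal.toReal_ofReal (by nlinarith)] at this
  have h2 : ((μ₂.bind (fun x => κ x)) A).toReal ≤
      ((μ₁.bind (fun x => κ x)) A).toReal + (1 - ε) * Dr := by
    have := ENNReal.toReal_mono (ENNReal.add_ne_top.mpr ⟨hfin₁, ENNReal.ofReal_ne_top⟩) key₂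
    rwa [ENNReal.toReal_add hfin₁ ENNReal.ofReal_ne_top,
      ENNReal.toReal_ofReal (by nlinarith)] at this
  rw [abs_sub_le_iff]
  exact ⟨by linarith, by linarith⟩
end

section
/- Let X be a measurable space, let κ be a Markov kernel from X to X, let π be a probability measure on X with π.bind κ = π, let n₀ ≥ 1, ε ∈ (0, 1], and let ν be a probability measure on X such that the n₀-step iterate satisfies κ^{n₀}(x, A) ≥ ε ν(A) for every x ∈ X and every measurable A. Then for every initial probability measure μ on X, every n ∈ ℕ, and every measurable set A, |(μ.bind κⁿ)(A) − π(A)| ≤ (1 − ε)^{⌊n/n₀⌋}, where ⌊n/n₀⌋ is the greatest integer not exceeding n/n₀. -/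
open MeasureTheory ProbabilityTheory ENNReal

section Aux

variable {X : Type*} [MeasurableSpace X]

/-- The `n`-fold iterate as a bona fide kernel. -/
noncomputable def iterK (κ : Kernel X X) : ℕ → Kernel X X
  | 0 => Kernel.id
  | n + 1 => κ ∘ₖ iterK κ n

@[simp] lemma iterK_zero (κ : Kernel X X) : iterK κ 0 = Kernel.id := rfl

@[simp] lemma iterK_succ (κ : Kernel X X) (n : ℕ) : iterK κ (n + 1) = κ ∘ₖ iterK κ n := rfl

instance iterK_markov (κ : Kernel X X) [IsMarkovKernel κ] (n : ℕ) :
    IsMarkovKernel (iterK κ n) := by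
  induction n with
  | zero => exact inferInstanceAs (IsMarkovKernel Kernel.id)
  | succ n ih => exact inferInstanceAs (IsMarkovKernel (κ ∘ₖ iterK κ n))

lemma kernelIter_eq (κ : Kernel X X) (n : ℕ) :
    kernelIter κ n = fun x => iterK κ n x := by
  induction n with
  | zero => funext x; simp [kernelIter, Kernel.id_apply]
  | succ n ih =>
      funext x
      simp only [kernelIter, ih, iterK_succ, Kernel.comp_apply]

lemma isProbabilityMeasure_bind_kernel (μ : Measure X) [IsProbabilityMeasure μ]
    (η : Kernel X X) [IsMarkovKernel η] :
    IsProbabilityMeasure (μ.bind (fun x => η x)) := by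
  constructor
  rw [Measure.bind_apply MeasurableSet.univ η.measurable.aemeasurable]
  simp [measure_univ]

/-- Key contraction lemma: one application of a kernel satisfying the minorization
condition contracts the (setwise) distance between probability measures by `1 - ε`. -/
lemma contract (K : Kernel X X) [IsMarkovKernel K]
    (ε : ℝ) (hε0 : 0 < ε) (hε1 : ε ≤ 1)
    (ν : Measure X) [IsProbabilityMeasure ν]
    (hminor : ∀ x, ∀ A : Set X, MeasurableSet A → ENNReal.ofReal ε * ν A ≤ K x A)
    (α β : Measure X) [IsProbabilityMeasure α] [IsProbabilityMeasure β]
    (d : ℝ) (hd : ∀ B : Set X, MeasurableSet B → |(α B).toReal - (β B).toReal| ≤ d)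
    {A : Set X} (hA : MeasurableSet A) :
    |((α.bind (fun x => K x)) A).toReal - ((β.bind (fun x => K x)) A).toReal| ≤ (1 - ε) * d := by
  obtain ⟨s, hs, hsle, hscle⟩ := hahn_decomposition (μ := α) (ν := β)
  set g : X → ℝ≥0∞ := fun x => K x A with hgdef
  set c : ℝ≥0∞ := ENNReal.ofReal ε * ν A with hcdef
  have hcle : ∀ x, c ≤ g x := fun x => hminor x A hA
  have hcfin : c ≠ ∞ := by
    refine ENNReal.mul_ne_top ENNReal.ofReal_ne_top (measure_ne_top ν A)
  set h : X → ℝ≥0∞ := fun x => g x - c with hhdef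
  -- pointwise bound h ≤ 1 - ε
  have hhle : ∀ x, h x ≤ ENNReal.ofReal (1 - ε) := by
    intro x
    have hAc : ENNReal.ofReal ε * ν Aᶜ ≠ ∞ :=
      ENNReal.mul_ne_top ENNReal.ofReal_ne_top (measure_ne_top ν Aᶜ)
    have h1 : g x + ENNReal.ofReal ε * ν Aᶜ ≤ 1 := by
      calc g x + ENNReal.ofReal ε * ν Aᶜ ≤ K x A + K x Aᶜ :=
            add_le_add le_rfl (hminor x Aᶜ hA.compl)
        _ = K x Set.univ := measure_add_measure_compl hA
        _ = 1 := measure_univ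
    have h2 : ENNReal.ofReal (1 - ε) + c + ENNReal.ofReal ε * ν Aᶜ = 1 := by
      rw [add_assoc, hcdef, ← mul_add, measure_add_measure_compl hA, measure_univ, mul_one,
        ← ENNReal.ofReal_add (by linarith) hε0.le]
      norm_num
    have h3 : g x + ENNReal.ofReal ε * ν Aᶜ ≤
        (ENNReal.ofReal (1 - ε) + c) + ENNReal.ofReal ε * ν Aᶜ := h1.trans_eq h2.symm
    have h4 : g x ≤ ENNReal.ofReal (1 - ε) + c :=
      (ENNReal.add_le_add_iff_right hAc).mp h3
    exact tsub_le_iff_right.mpr h4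
  have hh1 : ∀ x, h x ≤ 1 := by
    intro x
    exact le_trans (tsub_le_self) (measure_univ (μ := K x) ▸ measure_mono (Set.subset_univ A))
  -- bind value in terms of h
  have hbind : ∀ (ρ : Measure X), IsProbabilityMeasure ρ →
      (ρ.bind (fun x => K x)) A = ∫⁻ x, h x ∂ρ + c := by
    intro ρ hρ
    rw [Measure.bind_apply hA K.measurable.aemeasurable]
    have hgc : ∀ x, g x = h x + c := fun x => (tsub_add_cancel_of_le (hcle x)).symm
    calc ∫⁻ x, g x ∂ρ = ∫⁻ x, (h x + c) ∂ρ := lintegral_congr hgc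
      _ = ∫⁻ x, h x ∂ρ + c * ρ Set.univ := by
          rw [lintegral_add_right _ measurable_const, lintegral_const]
      _ = ∫⁻ x, h x ∂ρ + c := by rw [measure_univ, mul_one]
  -- Hahn decomposition machinery
  have hle1 : β.restrict s ≤ α.restrict s := by
    refine Measure.le_iff.mpr fun t ht => ?_
    rw [Measure.restrict_apply ht, Measure.restrict_apply ht]
    exact hsle _ (ht.inter hs) Set.inter_subset_right
  have hle2 : α.restrict sᶜ ≤ β.restrict sᶜ := by
    refine Measure.le_iff.mpr fun t ht => ?_
    rw [Measure.restrict_apply ht, Measure.restrict_apply ht]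
    exact hscle _ (ht.inter hs.compl) Set.inter_subset_right
  set γ : Measure X := α.restrict s - β.restrict s with hγdef
  set δ : Measure X := β.restrict sᶜ - α.restrict sᶜ with hδdef
  have hγ : γ + β.restrict s = α.restrict s := Measure.sub_add_cancel_of_le hle1
  have hδ : δ + α.restrict sᶜ = β.restrict sᶜ := Measure.sub_add_cancel_of_le hle2
  have e1 : ∫⁻ x, h x ∂α
      = ∫⁻ x, h x ∂γ + ∫⁻ x, h x ∂(β.restrict s) + ∫⁻ x, h x ∂(α.restrict sᶜ) := by
    rw [← lintegral_add_compl h hs (μ := α), ← hγ, lintegral_add_measure]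
  have e2 : ∫⁻ x, h x ∂β
      = ∫⁻ x, h x ∂(β.restrict s) + (∫⁻ x, h x ∂δ + ∫⁻ x, h x ∂(α.restrict sᶜ)) := by
    rw [← lintegral_add_compl h hs (μ := β), ← hδ, lintegral_add_measure]
  -- finiteness
  have hbound : ∀ ρ : Measure X, ∫⁻ x, h x ∂ρ ≤ ENNReal.ofReal (1 - ε) * ρ Set.univ := by
    intro ρ
    calc ∫⁻ x, h x ∂ρ ≤ ∫⁻ _, ENNReal.ofReal (1 - ε) ∂ρ := lintegral_mono hhle
      _ = ENNReal.ofReal (1 - ε) * ρ Set.univ := lintegral_const _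
  have hγu : γ Set.univ = α s - β s := by
    rw [hγdef, Measure.sub_apply MeasurableSet.univ hle1, Measure.restrict_apply_univ,
      Measure.restrict_apply_univ]
  have hδu : δ Set.univ = β sᶜ - α sᶜ := by
    rw [hδdef, Measure.sub_apply MeasurableSet.univ hle2, Measure.restrict_apply_univ,
      Measure.restrict_apply_univ]
  have hγufin : γ Set.univ ≠ ∞ := by
    rw [hγu]; exact (tsub_le_self.trans_lt (measure_ne_top α s).lt_top).ne
  have hδufin : δ Set.univ ≠ ∞ := by
    rw [hδu]; exact (tsub_le_self.trans_lt (measure_ne_top β sᶜ).lt_top).ne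
  have hPfin : ∫⁻ x, h x ∂γ ≠ ∞ :=
    (lt_of_le_of_lt (hbound γ) (ENNReal.mul_lt_top ENNReal.ofReal_lt_top hγufin.lt_top)).ne
  have hNfin : ∫⁻ x, h x ∂δ ≠ ∞ :=
    (lt_of_le_of_lt (hbound δ) (ENNReal.mul_lt_top ENNReal.ofReal_lt_top hδufin.lt_top)).ne
  have hIafin : (α.bind (fun x => K x)) A ≠ ∞ := by
    rw [hbind α inferInstance]
    exact ENNReal.add_ne_top.mpr ⟨(lt_of_le_of_lt (hbound α)
      (ENNReal.mul_lt_top ENNReal.ofReal_lt_top (measure_ne_top α _).lt_top)).ne, hcfin⟩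
  have hIbfin : (β.bind (fun x => K x)) A ≠ ∞ := by
    rw [hbind β inferInstance]
    exact ENNReal.add_ne_top.mpr ⟨(lt_of_le_of_lt (hbound β)
      (ENNReal.mul_lt_top ENNReal.ofReal_lt_top (measure_ne_top β _).lt_top)).ne, hcfin⟩
  -- key ENNReal identity
  have key : (α.bind (fun x => K x)) A + ∫⁻ x, h x ∂δ
      = (β.bind (fun x => K x)) A + ∫⁻ x, h x ∂γ := by
    rw [hbind α inferInstance, hbind β inferInstance, e1, e2]; ring
  -- pass to reals
  have keyR : ((α.bind (fun x => K x)) A).toReal + (∫⁻ x, h x ∂δ).toReal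
      = ((β.bind (fun x => K x)) A).toReal + (∫⁻ x, h x ∂γ).toReal := by
    rw [← ENNReal.toReal_add hIafin hNfin, ← ENNReal.toReal_add hIbfin hPfin, key]
  -- bounds on the real integrals
  have hms : (α s).toReal - (β s).toReal ≤ d := le_trans (le_abs_self _) (hd s hs)
  have hmsc : (β sᶜ).toReal - (α sᶜ).toReal ≤ d := by
    have := hd sᶜ hs.compl
    rw [abs_sub_comm] at this
    exact le_trans (le_abs_self _) this
  have hPle : (∫⁻ x, h x ∂γ).toReal ≤ (1 - ε) * d := by
    have h1 : (∫⁻ x, h x ∂γ).toReal ≤ (ENNReal.ofReal (1 - ε) * γ Set.univ).toReal :=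
      ENNReal.toReal_mono (ENNReal.mul_ne_top ENNReal.ofReal_ne_top hγufin) (hbound γ)
    have h2 : (ENNReal.ofReal (1 - ε) * γ Set.univ).toReal
        = (1 - ε) * ((α s).toReal - (β s).toReal) := by
      rw [ENNReal.toReal_mul, ENNReal.toReal_ofReal (by linarith), hγu,
        ENNReal.toReal_sub_of_le (hsle s hs subset_rfl) (measure_ne_top α s)]
    have h3 : (1 - ε) * ((α s).toReal - (β s).toReal) ≤ (1 - ε) * d :=
      mul_le_mul_of_nonneg_left hms (by linarith)
    linarith [h1, h2.le, h2.ge]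
  have hNle : (∫⁻ x, h x ∂δ).toReal ≤ (1 - ε) * d := by
    have h1 : (∫⁻ x, h x ∂δ).toReal ≤ (ENNReal.ofReal (1 - ε) * δ Set.univ).toReal :=
      ENNReal.toReal_mono (ENNReal.mul_ne_top ENNReal.ofReal_ne_top hδufin) (hbound δ)
    have h2 : (ENNReal.ofReal (1 - ε) * δ Set.univ).toReal
        = (1 - ε) * ((β sᶜ).toReal - (α sᶜ).toReal) := by
      rw [ENNReal.toReal_mul, ENNReal.toReal_ofReal (by linarith), hδu,
        ENNReal.toReal_sub_of_le (hscle sᶜ hs.compl subset_rfl) (measure_ne_top β sᶜ)]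
    have h3 : (1 - ε) * ((β sᶜ).toReal - (α sᶜ).toReal) ≤ (1 - ε) * d :=
      mul_le_mul_of_nonneg_left hmsc (by linarith)
    linarith [h1, h2.le, h2.ge]
  have hPnn : 0 ≤ (∫⁻ x, h x ∂γ).toReal := ENNReal.toReal_nonneg
  have hNnn : 0 ≤ (∫⁻ x, h x ∂δ).toReal := ENNReal.toReal_nonneg
  rw [abs_le]
  constructor <;> linarith [keyR, hPle, hNle, hPnn, hNnn]

end Aux

theorem uniform_ergodicity_of_minorization {X : Type*} [MeasurableSpace X]
    (κ : Kernel X X) [IsMarkovKernel κ]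
    (π : Measure X) [IsProbabilityMeasure π] (hπ : π.bind (fun x => κ x) = π)
    (n₀ : ℕ) (hn₀ : 1 ≤ n₀)
    (ε : ℝ) (hε : ε ∈ Set.Ioc (0 : ℝ) 1)
    (ν : Measure X) [IsProbabilityMeasure ν]
    (hminor : ∀ x, ∀ A : Set X, MeasurableSet A →
      ENNReal.ofReal ε * ν A ≤ kernelIter κ n₀ x A) :
    ∀ (μ : Measure X), IsProbabilityMeasure μ → ∀ (n : ℕ) (A : Set X), MeasurableSet A →
      |((μ.bind (kernelIter κ n)) A).toReal - (π A).toReal| ≤ (1 - ε) ^ (n / n₀) := by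
  obtain ⟨hε0, hε1⟩ := hε
  have hmin' : ∀ x, ∀ A : Set X, MeasurableSet A →
      ENNReal.ofReal ε * ν A ≤ (iterK κ n₀) x A := by
    intro x A hA
    have := hminor x A hA
    rwa [kernelIter_eq] at this
  -- invariance of π under the iterates
  have πiter : ∀ n : ℕ, π.bind (fun x => iterK κ n x) = π := by
    intro n
    induction n with
    | zero => simp only [iterK_zero, Kernel.id_apply]; exact Measure.bind_dirac
    | succ n ih =>
        simp only [iterK_succ, Kernel.comp_apply]
        rw [← Measure.bind_bind (iterK κ n).measurable.aemeasurable κ.measurable.aemeasurable, ih, hπ]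
  -- additivity of iterates under bind
  have bindAdd : ∀ (a b : ℕ) (μ : Measure X),
      μ.bind (fun x => iterK κ (a + b) x)
        = (μ.bind (fun x => iterK κ a x)).bind (fun x => iterK κ b x) := by
    intro a b
    induction b with
    | zero => intro μ; simp only [Nat.add_zero, iterK_zero, Kernel.id_apply, Measure.bind_dirac]
    | succ b ihb =>
        intro μ
        have h1 : a + (b + 1) = (a + b) + 1 := by omega
        rw [h1]
        simp only [iterK_succ, Kernel.comp_apply]
        rw [← Measure.bind_bind (iterK κ (a + b)).measurable.aemeasurable κ.measurable.aemeasurable, ihb μ,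
          Measure.bind_bind (iterK κ b).measurable.aemeasurable κ.measurable.aemeasurable]
  -- main claim by induction on the number of completed blocks
  have claim : ∀ k : ℕ, ∀ n : ℕ, ∀ (μ : Measure X), IsProbabilityMeasure μ → n₀ * k ≤ n →
      ∀ A : Set X, MeasurableSet A →
        |((μ.bind (fun x => iterK κ n x)) A).toReal - (π A).toReal| ≤ (1 - ε) ^ k := by
    intro k
    induction k with
    | zero =>
        intro n μ hμ _ A hA
        have hb : IsProbabilityMeasure (μ.bind (fun x => iterK κ n x)) :=
          isProbabilityMeasure_bind_kernel μ (iterK κ n)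
        have h1 : ((μ.bind (fun x => iterK κ n x)) A).toReal ≤ 1 :=
          ENNReal.toReal_mono one_ne_top prob_le_one
        have h2 : (π A).toReal ≤ 1 := ENNReal.toReal_mono one_ne_top prob_le_one
        have h3 : 0 ≤ ((μ.bind (fun x => iterK κ n x)) A).toReal := ENNReal.toReal_nonneg
        have h4 : 0 ≤ (π A).toReal := ENNReal.toReal_nonneg
        rw [pow_zero, abs_le]
        constructor <;> linarith
    | succ k ih =>
        intro n μ hμ hn A hA
        rw [Nat.mul_succ] at hn
        have hsplit := bindAdd (n - n₀) n₀ μ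
        rw [show n - n₀ + n₀ = n from by omega] at hsplit
        have hα : IsProbabilityMeasure (μ.bind (fun x => iterK κ (n - n₀) x)) :=
          isProbabilityMeasure_bind_kernel μ (iterK κ (n - n₀))
        have hd : ∀ B : Set X, MeasurableSet B →
            |((μ.bind (fun x => iterK κ (n - n₀) x)) B).toReal - (π B).toReal| ≤ (1 - ε) ^ k :=
          ih (n - n₀) μ hμ (by omega)
        have hc := contract (iterK κ n₀) ε hε0 hε1 ν hmin'
          (μ.bind (fun x => iterK κ (n - n₀) x)) π ((1 - ε) ^ k) hd hA
        rw [πiter n₀] at hc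
        rw [hsplit, pow_succ, mul_comm ((1 - ε) ^ k)]
        exact hc
  intro μ hμ n A hA
  rw [kernelIter_eq]
  exact claim (n / n₀) n μ hμ (by rw [mul_comm]; exact Nat.div_mul_le_self n n₀) A hA
end
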